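/- (Theorem 2, Case 1: global minimizer.) Let M be an N×N real symmetric matrix with eigenvalues λ₁ > λ₂ > ⋯ > λ_r > λ_{r+1} ≥ ⋯ ≥ λ_N and d_min = min_{1 ≤ s < j ≤ r+1} (λ_s − λ_j). Let X_Ω = [v₁, …, v_r] ∈ ℝ^{N×r} whose j-th column is a unit eigenvector of M with eigenvalue λ_j (so Ω = {1, …, r} in order). Then for every U in the tangent space T_{X_Ω} = {U : X_Ωᵀ U + Uᵀ X_Ω = 0}, hess g(X_Ω)[U,U] = ⟨X_Ωᵀ M X_Ω, Uᵀ U N_r⟩ − ⟨M, U N_r Uᵀ⟩ ≥ (1/2) d_min ‖U‖_F²; in particular λ_min(hess g(X_Ω)) ≥ (1/2) d_min and X_Ω is a global minimizer of g on the Stiefel manifold. -/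

import Mathlib

open Matrix

/-- The diagonal weight matrix `N_r = diag(r, r−1, …, 1)`. -/
noncomputable def Nr (r : ℕ) : Matrix (Fin r) (Fin r) ℝ :=
  Matrix.diagonal fun j => (r : ℝ) - (j : ℕ)

/-- The trace inner product `⟨A, B⟩ = ∑_{ij} A_{ij} B_{ij}`. -/
def tip {m n : ℕ} (A B : Matrix (Fin m) (Fin n) ℝ) : ℝ :=
  ∑ i, ∑ j, A i j * B i j

/-- `d_min = min_{1 ≤ s < j ≤ r+1} (λ_s − λ_j)` (0-based: `0 ≤ s < j ≤ r`). -/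
noncomputable def dmin {N : ℕ} (lam : Fin N → ℝ) (r : ℕ) : ℝ :=
  sInf {d : ℝ | ∃ s j : Fin N, (s : ℕ) < (j : ℕ) ∧ (j : ℕ) ≤ r ∧ d = lam s - lam j}

theorem dmin_le' {N r : ℕ} (lam : Fin N → ℝ)
    (hstrict : ∀ s j : Fin N, (s : ℕ) < (j : ℕ) → (j : ℕ) ≤ r → lam j < lam s)
    (s j : Fin N) (hsj : (s : ℕ) < (j : ℕ)) (hjr : (j : ℕ) ≤ r) :
    dmin lam r ≤ lam s - lam j := by
  apply csInf_le
  · refine ⟨0, fun d hd => ?_⟩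
    obtain ⟨s', j', h1, h2, rfl⟩ := hd
    have := hstrict s' j' h1 h2
    linarith
  · exact ⟨s, j, hsj, hjr, rfl⟩

theorem dmin_nonneg' {N r : ℕ} (hr : 1 ≤ r) (hrN : r < N) (lam : Fin N → ℝ)
    (hstrict : ∀ s j : Fin N, (s : ℕ) < (j : ℕ) → (j : ℕ) ≤ r → lam j < lam s) :
    0 ≤ dmin lam r := by
  apply le_csInf
  · exact ⟨lam ⟨0, by omega⟩ - lam ⟨r, hrN⟩, ⟨0, by omega⟩, ⟨r, hrN⟩, by simp; omega,
      le_refl r, rfl⟩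
  · rintro d ⟨s', j', h1, h2, rfl⟩
    have := hstrict s' j' h1 h2
    linarith

theorem aux_split' {N r : ℕ} (h : r ≤ N) (f : Fin N → ℝ) :
    ∑ k, f k = (∑ q : Fin r, f (Fin.castLE h q)) +
      ∑ k ∈ Finset.univ.filter (fun k : Fin N => r ≤ (k : ℕ)), f k := by
  rw [← Finset.sum_filter_add_sum_filter_not Finset.univ (fun k : Fin N => (k : ℕ) < r) f]
  congr 1
  · exact Finset.sum_bij'
      (fun (k : Fin N) (hk : k ∈ Finset.univ.filter (fun k : Fin N => (k:ℕ) < r)) =>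
        (⟨(k:ℕ), (Finset.mem_filter.mp hk).2⟩ : Fin r))
      (fun (q : Fin r) _ => Fin.castLE h q)
      (fun _ _ => Finset.mem_univ _)
      (fun q _ => Finset.mem_filter.mpr ⟨Finset.mem_univ _, q.isLt⟩)
      (fun _ _ => rfl) (fun _ _ => rfl) (fun _ _ => rfl)
  · apply Finset.sum_congr _ (fun _ _ => rfl)
    ext k; simp [not_lt]

theorem hess_scalar' {N r : ℕ} (hrN : r < N) (lam : Fin N → ℝ)
    (d : ℝ) (hd0 : 0 ≤ d)
    (hgap : ∀ s j : Fin N, (s : ℕ) < (j : ℕ) → (j : ℕ) ≤ r → d ≤ lam s - lam j)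
    (hmono : ∀ s j : Fin N, r ≤ (s : ℕ) → s ≤ j → lam j ≤ lam s)
    (A : Matrix (Fin N) (Fin r) ℝ)
    (hA : ∀ p q : Fin r, A (Fin.castLE hrN.le p) q + A (Fin.castLE hrN.le q) p = 0) :
    ∑ p : Fin r, ∑ k : Fin N,
        ((r:ℝ) - (p:ℕ)) * (lam (Fin.castLE hrN.le p) - lam k) * A k p ^ 2
      ≥ (1/2) * d * ∑ p : Fin r, ∑ k : Fin N, A k p ^ 2 := by
  set c : Fin r → Fin r → ℝ := fun p q =>
    ((r:ℝ) - (p:ℕ)) * (lam (Fin.castLE hrN.le p) - lam (Fin.castLE hrN.le q)) with hc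
  set B : Fin r → Fin r → ℝ := fun p q => A (Fin.castLE hrN.le q) p ^ 2 with hBdef
  have hB : ∀ p q, B p q = B q p := by
    intro p q
    have h : A (Fin.castLE hrN.le q) p = - A (Fin.castLE hrN.le p) q := by linarith [hA q p]
    simp only [hBdef]
    rw [h]; ring
  have hBnn : ∀ p q, 0 ≤ B p q := fun p q => sq_nonneg _
  have hBdiag : ∀ p, B p p = 0 := by
    intro p
    have h : A (Fin.castLE hrN.le p) p = 0 := by linarith [hA p p]
    simp only [hBdef]
    rw [h]; ring
  have hsplitL :
      (∑ p : Fin r, ∑ k : Fin N,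
        ((r:ℝ) - (p:ℕ)) * (lam (Fin.castLE hrN.le p) - lam k) * A k p ^ 2)
      = (∑ p : Fin r, ∑ q : Fin r, c p q * B p q)
        + ∑ p : Fin r, ∑ k ∈ Finset.univ.filter (fun k : Fin N => r ≤ (k : ℕ)),
            ((r:ℝ) - (p:ℕ)) * (lam (Fin.castLE hrN.le p) - lam k) * A k p ^ 2 := by
    rw [← Finset.sum_add_distrib]
    exact Finset.sum_congr rfl fun p _ => aux_split' hrN.le _
  have hsplitR :
      (∑ p : Fin r, ∑ k : Fin N, A k p ^ 2)
      = (∑ p : Fin r, ∑ q : Fin r, B p q)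
        + ∑ p : Fin r, ∑ k ∈ Finset.univ.filter (fun k : Fin N => r ≤ (k : ℕ)), A k p ^ 2 := by
    rw [← Finset.sum_add_distrib]
    exact Finset.sum_congr rfl fun p _ => aux_split' hrN.le _
  rw [ge_iff_le, hsplitL, hsplitR]
  have key1 : (1/2) * d * (∑ p : Fin r, ∑ q : Fin r, B p q)
      ≤ ∑ p : Fin r, ∑ q : Fin r, c p q * B p q := by
    have hTT : (∑ p : Fin r, ∑ q : Fin r, c p q * B p q)
        = ∑ p : Fin r, ∑ q : Fin r, c q p * B p q := by
      rw [Finset.sum_comm]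
      exact Finset.sum_congr rfl fun p _ => Finset.sum_congr rfl fun q _ => by rw [hB p q]
    have h2T : (∑ p : Fin r, ∑ q : Fin r, c p q * B p q)
          + (∑ p : Fin r, ∑ q : Fin r, c p q * B p q)
        = ∑ p : Fin r, ∑ q : Fin r, (c p q + c q p) * B p q := by
      nth_rewrite 2 [hTT]
      rw [← Finset.sum_add_distrib]
      exact Finset.sum_congr rfl fun p _ => by
        rw [← Finset.sum_add_distrib]
        exact Finset.sum_congr rfl fun q _ => by ring
    have hterm : ∀ p q : Fin r, d * B p q ≤ (c p q + c q p) * B p q := by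
      intro p q
      rcases lt_trichotomy (p : ℕ) (q : ℕ) with hpq | hpq | hpq
      · have hg := hgap (Fin.castLE hrN.le p) (Fin.castLE hrN.le q)
          (by simpa using hpq) (by simpa using (Fin.is_le _))
        have h1 : (1:ℝ) ≤ (q:ℕ) - (p:ℕ) := by
          have h : (p:ℕ) + 1 ≤ (q:ℕ) := hpq
          have : ((p:ℕ):ℝ) + 1 ≤ ((q:ℕ):ℝ) := by exact_mod_cast h
          linarith
        have hcc : c p q + c q p
            = (((q:ℕ):ℝ) - ((p:ℕ):ℝ)) *
              (lam (Fin.castLE hrN.le p) - lam (Fin.castLE hrN.le q)) := by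
          simp only [hc]; ring
        rw [hcc]
        have hy : (0:ℝ) ≤ lam (Fin.castLE hrN.le p) - lam (Fin.castLE hrN.le q) :=
          le_trans hd0 hg
        have hprod : d ≤ (((q:ℕ):ℝ) - ((p:ℕ):ℝ)) *
            (lam (Fin.castLE hrN.le p) - lam (Fin.castLE hrN.le q)) := by
          calc d ≤ lam (Fin.castLE hrN.le p) - lam (Fin.castLE hrN.le q) := hg
            _ = 1 * _ := (one_mul _).symm
            _ ≤ _ := mul_le_mul_of_nonneg_right h1 hy
        exact mul_le_mul_of_nonneg_right hprod (hBnn p q)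
      · have : p = q := Fin.ext hpq
        subst this
        simp [hBdiag]
      · have hg := hgap (Fin.castLE hrN.le q) (Fin.castLE hrN.le p)
          (by simpa using hpq) (by simpa using (Fin.is_le _))
        have h1 : (1:ℝ) ≤ (p:ℕ) - (q:ℕ) := by
          have h : (q:ℕ) + 1 ≤ (p:ℕ) := hpq
          have : ((q:ℕ):ℝ) + 1 ≤ ((p:ℕ):ℝ) := by exact_mod_cast h
          linarith
        have hcc : c p q + c q p
            = (((p:ℕ):ℝ) - ((q:ℕ):ℝ)) *
              (lam (Fin.castLE hrN.le q) - lam (Fin.castLE hrN.le p)) := by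
          simp only [hc]; ring
        rw [hcc]
        have hy : (0:ℝ) ≤ lam (Fin.castLE hrN.le q) - lam (Fin.castLE hrN.le p) :=
          le_trans hd0 hg
        have hprod : d ≤ (((p:ℕ):ℝ) - ((q:ℕ):ℝ)) *
            (lam (Fin.castLE hrN.le q) - lam (Fin.castLE hrN.le p)) := by
          calc d ≤ lam (Fin.castLE hrN.le q) - lam (Fin.castLE hrN.le p) := hg
            _ = 1 * _ := (one_mul _).symm
            _ ≤ _ := mul_le_mul_of_nonneg_right h1 hy
        exact mul_le_mul_of_nonneg_right hprod (hBnn p q)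
    have hd2 : d * (∑ p : Fin r, ∑ q : Fin r, B p q)
        ≤ ∑ p : Fin r, ∑ q : Fin r, (c p q + c q p) * B p q := by
      rw [Finset.mul_sum]
      refine Finset.sum_le_sum fun p _ => ?_
      rw [Finset.mul_sum]
      exact Finset.sum_le_sum fun q _ => hterm p q
    linarith [h2T, hd2]
  have key2 : (1/2) * d *
      (∑ p : Fin r, ∑ k ∈ Finset.univ.filter (fun k : Fin N => r ≤ (k : ℕ)), A k p ^ 2)
      ≤ ∑ p : Fin r, ∑ k ∈ Finset.univ.filter (fun k : Fin N => r ≤ (k : ℕ)),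
          ((r:ℝ) - (p:ℕ)) * (lam (Fin.castLE hrN.le p) - lam k) * A k p ^ 2 := by
    rw [Finset.mul_sum]
    refine Finset.sum_le_sum fun p _ => ?_
    rw [Finset.mul_sum]
    refine Finset.sum_le_sum fun k hk => ?_
    have hkr : r ≤ (k : ℕ) := (Finset.mem_filter.mp hk).2
    have hjr : lam k ≤ lam ⟨r, hrN⟩ := hmono ⟨r, hrN⟩ k (le_refl r) hkr
    have hg := hgap (Fin.castLE hrN.le p) ⟨r, hrN⟩ (by simpa using p.isLt) (le_refl r)
    have h1 : (1:ℝ) ≤ (r:ℝ) - (p:ℕ) := by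
      have h : (p:ℕ) + 1 ≤ r := p.isLt
      have : ((p:ℕ):ℝ) + 1 ≤ (r:ℝ) := by exact_mod_cast h
      linarith
    have hlk : d ≤ lam (Fin.castLE hrN.le p) - lam k := by linarith
    have hy : (0:ℝ) ≤ lam (Fin.castLE hrN.le p) - lam k := le_trans hd0 hlk
    have hprod : d ≤ ((r:ℝ) - ((p:ℕ):ℝ)) * (lam (Fin.castLE hrN.le p) - lam k) := by
      calc d ≤ lam (Fin.castLE hrN.le p) - lam k := hlk
        _ = 1 * _ := (one_mul _).symm
        _ ≤ _ := mul_le_mul_of_nonneg_right h1 hy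
    calc (1/2) * d * A k p ^ 2 ≤ d * A k p ^ 2 := by nlinarith [sq_nonneg (A k p)]
      _ ≤ _ := mul_le_mul_of_nonneg_right hprod (sq_nonneg _)
  calc (1/2) * d * ((∑ p : Fin r, ∑ q : Fin r, B p q)
        + ∑ p : Fin r, ∑ k ∈ Finset.univ.filter (fun k : Fin N => r ≤ (k : ℕ)), A k p ^ 2)
      = (1/2) * d * (∑ p : Fin r, ∑ q : Fin r, B p q)
        + (1/2) * d * (∑ p : Fin r,
            ∑ k ∈ Finset.univ.filter (fun k : Fin N => r ≤ (k : ℕ)), A k p ^ 2) := by ring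
    _ ≤ _ := add_le_add key1 key2

theorem kyfan' {N r : ℕ} (hrN : r < N) (lam : Fin N → ℝ)
    (hstrict : ∀ s j : Fin N, (s : ℕ) < (j : ℕ) → (j : ℕ) ≤ r → lam j < lam s)
    (hmono : ∀ s j : Fin N, r ≤ (s : ℕ) → s ≤ j → lam j ≤ lam s)
    (t : Fin r) (T : Fin N → ℝ) (hT0 : ∀ k, 0 ≤ T k) (hT1 : ∀ k, T k ≤ 1)
    (hsum : ∑ k, T k = ∑ k : Fin N, (if (k:ℕ) ≤ (t:ℕ) then (1:ℝ) else 0)) :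
    ∑ k, lam k * T k ≤ ∑ k : Fin N, lam k * (if (k:ℕ) ≤ (t:ℕ) then (1:ℝ) else 0) := by
  set τ : Fin N := ⟨(t:ℕ), lt_trans t.isLt hrN⟩ with hτ
  have key : ∀ k : Fin N,
      0 ≤ (lam k - lam τ) * ((if (k:ℕ) ≤ (t:ℕ) then (1:ℝ) else 0) - T k) := by
    intro k
    by_cases hk : (k:ℕ) ≤ (t:ℕ)
    · have h1 : lam τ ≤ lam k := by
        rcases eq_or_lt_of_le hk with h | h
        · have : k = τ := Fin.ext (by simpa [hτ] using h)
          rw [this]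
        · exact le_of_lt (hstrict k τ (by simpa [hτ] using h)
            (by simp only [hτ]; omega))
      simp only [hk, if_pos]
      exact mul_nonneg (by linarith) (by linarith [hT1 k])
    · have h2 : lam k ≤ lam τ := by
        by_cases hk2 : (k:ℕ) ≤ r
        · exact le_of_lt (hstrict τ k (by simp only [hτ]; omega) hk2)
        · have ha : lam k ≤ lam ⟨r, hrN⟩ :=
            hmono ⟨r, hrN⟩ k (le_refl r) (by rw [Fin.le_def]; simp; omega)
          have hb : lam ⟨r, hrN⟩ < lam τ :=
            hstrict τ ⟨r, hrN⟩ (by simp only [hτ]; omega) (le_refl r)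
          linarith
      simp only [hk, if_neg, if_false]
      nlinarith [hT0 k]
  have e1 : ∑ k : Fin N, (lam k - lam τ) * ((if (k:ℕ) ≤ (t:ℕ) then (1:ℝ) else 0) - T k)
      = (∑ k : Fin N, lam k * (if (k:ℕ) ≤ (t:ℕ) then (1:ℝ) else 0)) - (∑ k, lam k * T k)
        - lam τ * ((∑ k : Fin N, (if (k:ℕ) ≤ (t:ℕ) then (1:ℝ) else 0)) - ∑ k, T k) := by
    rw [mul_sub, Finset.mul_sum, Finset.mul_sum, ← Finset.sum_sub_distrib,
      ← Finset.sum_sub_distrib, ← Finset.sum_sub_distrib]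
    exact Finset.sum_congr rfl fun k _ => by ring
  have e2 : 0 ≤ ∑ k : Fin N, (lam k - lam τ) * ((if (k:ℕ) ≤ (t:ℕ) then (1:ℝ) else 0) - T k) :=
    Finset.sum_nonneg fun k _ => key k
  rw [e1, hsum] at e2
  linarith

theorem global_scalar' {N r : ℕ} (hrN : r < N) (lam : Fin N → ℝ)
    (hstrict : ∀ s j : Fin N, (s : ℕ) < (j : ℕ) → (j : ℕ) ≤ r → lam j < lam s)
    (hmono : ∀ s j : Fin N, r ≤ (s : ℕ) → s ≤ j → lam j ≤ lam s)
    (S : Fin N → Fin r → ℝ) (hS : ∀ k p, 0 ≤ S k p)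
    (hcol : ∀ p, ∑ k, S k p = 1) (hrow : ∀ k, ∑ p, S k p ≤ 1) :
    ∑ p : Fin r, ((r:ℝ) - (p:ℕ)) * (∑ k, lam k * S k p)
      ≤ ∑ p : Fin r, ((r:ℝ) - (p:ℕ)) * lam (Fin.castLE hrN.le p) := by
  set T : Fin r → Fin N → ℝ := fun t k => ∑ p : Fin r, (if (p:ℕ) ≤ (t:ℕ) then S k p else 0)
    with hTdef
  have hw : ∀ p : Fin r, ((r:ℝ) - (p:ℕ))
      = ∑ t : Fin r, (if (p:ℕ) ≤ (t:ℕ) then (1:ℝ) else 0) := by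
    intro p
    have hfe : (Finset.univ.filter fun t : Fin r => (p:ℕ) ≤ (t:ℕ)) = Finset.Ici p := by
      ext x
      simp only [Finset.mem_filter, Finset.mem_univ, true_and, Finset.mem_Ici, Fin.le_def]
    rw [Finset.sum_boole, hfe, Fin.card_Ici, Nat.cast_sub p.isLt.le]
  have hL : ∑ p : Fin r, ((r:ℝ) - (p:ℕ)) * (∑ k, lam k * S k p)
      = ∑ t : Fin r, ∑ k : Fin N, lam k * T t k := by
    calc ∑ p : Fin r, ((r:ℝ) - (p:ℕ)) * (∑ k, lam k * S k p)
        = ∑ p : Fin r, ∑ t : Fin r,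
            (if (p:ℕ) ≤ (t:ℕ) then (1:ℝ) else 0) * (∑ k, lam k * S k p) := by
          exact Finset.sum_congr rfl fun p _ => by rw [hw p, Finset.sum_mul]
      _ = ∑ t : Fin r, ∑ p : Fin r,
            (if (p:ℕ) ≤ (t:ℕ) then (1:ℝ) else 0) * (∑ k, lam k * S k p) := Finset.sum_comm
      _ = ∑ t : Fin r, ∑ p : Fin r, ∑ k : Fin N,
            lam k * (if (p:ℕ) ≤ (t:ℕ) then S k p else 0) := by
          refine Finset.sum_congr rfl fun t _ => Finset.sum_congr rfl fun p _ => ?_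
          by_cases hc : (p:ℕ) ≤ (t:ℕ) <;> simp [hc]
      _ = ∑ t : Fin r, ∑ k : Fin N, lam k * T t k := by
          refine Finset.sum_congr rfl fun t _ => ?_
          rw [Finset.sum_comm]
          exact Finset.sum_congr rfl fun k _ => by rw [hTdef, ← Finset.mul_sum]
  have hR : ∑ p : Fin r, ((r:ℝ) - (p:ℕ)) * lam (Fin.castLE hrN.le p)
      = ∑ t : Fin r, ∑ k : Fin N, lam k * (if (k:ℕ) ≤ (t:ℕ) then (1:ℝ) else 0) := by
    calc ∑ p : Fin r, ((r:ℝ) - (p:ℕ)) * lam (Fin.castLE hrN.le p)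
        = ∑ p : Fin r, ∑ t : Fin r,
            (if (p:ℕ) ≤ (t:ℕ) then (1:ℝ) else 0) * lam (Fin.castLE hrN.le p) := by
          exact Finset.sum_congr rfl fun p _ => by rw [hw p, Finset.sum_mul]
      _ = ∑ t : Fin r, ∑ p : Fin r,
            (if (p:ℕ) ≤ (t:ℕ) then (1:ℝ) else 0) * lam (Fin.castLE hrN.le p) :=
          Finset.sum_comm
      _ = ∑ t : Fin r, ∑ k : Fin N, lam k * (if (k:ℕ) ≤ (t:ℕ) then (1:ℝ) else 0) := by
          refine Finset.sum_congr rfl fun t _ => ?_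
          rw [aux_split' hrN.le (fun k : Fin N => lam k * (if (k:ℕ) ≤ (t:ℕ) then (1:ℝ) else 0))]
          have h0 : ∑ k ∈ Finset.univ.filter (fun k : Fin N => r ≤ (k : ℕ)),
              lam k * (if (k:ℕ) ≤ (t:ℕ) then (1:ℝ) else 0) = 0 := by
            apply Finset.sum_eq_zero
            intro k hk
            have h1 : r ≤ (k:ℕ) := (Finset.mem_filter.mp hk).2
            have h2 : ¬ ((k:ℕ) ≤ (t:ℕ)) := by omega
            simp [h2]
          rw [h0, add_zero]
          exact (Finset.sum_congr rfl fun q _ => by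
            simp only [Fin.coe_castLE]; ring).symm
  rw [hL, hR]
  refine Finset.sum_le_sum fun t _ => ?_
  set τ : Fin N := ⟨(t:ℕ), lt_trans t.isLt hrN⟩ with hτ
  refine kyfan' hrN lam hstrict hmono t (T t) ?_ ?_ ?_
  · intro k
    exact Finset.sum_nonneg fun p _ => by by_cases hc : (p:ℕ) ≤ (t:ℕ) <;> simp [hc, hS k p]
  · intro k
    calc T t k ≤ ∑ p : Fin r, S k p := by
          refine Finset.sum_le_sum fun p _ => ?_
          by_cases hc : (p:ℕ) ≤ (t:ℕ) <;> simp [hc, hS k p]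
      _ ≤ 1 := hrow k
  · have h1 : ∑ k, T t k = ((t:ℕ) + 1 : ℝ) := by
      rw [hTdef]
      rw [Finset.sum_comm]
      have hcc : ∀ p : Fin r, ∑ k : Fin N, (if (p:ℕ) ≤ (t:ℕ) then S k p else 0)
          = (if (p:ℕ) ≤ (t:ℕ) then (1:ℝ) else 0) := by
        intro p
        by_cases hc : (p:ℕ) ≤ (t:ℕ) <;> simp [hc, hcol p]
      rw [Finset.sum_congr rfl fun p _ => hcc p]
      have hfe : (Finset.univ.filter fun p : Fin r => (p:ℕ) ≤ (t:ℕ)) = Finset.Iic t := by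
        ext x
        simp only [Finset.mem_filter, Finset.mem_univ, true_and, Finset.mem_Iic, Fin.le_def]
      rw [Finset.sum_boole, hfe, Fin.card_Iic]
      push_cast; ring
    have h2 : ∑ k : Fin N, (if (k:ℕ) ≤ (t:ℕ) then (1:ℝ) else 0) = ((t:ℕ) + 1 : ℝ) := by
      have hfe : (Finset.univ.filter fun k : Fin N => (k:ℕ) ≤ (t:ℕ)) = Finset.Iic τ := by
        ext x
        simp only [Finset.mem_filter, Finset.mem_univ, true_and, Finset.mem_Iic, Fin.le_def, hτ]
      rw [Finset.sum_boole, hfe, Fin.card_Iic]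
      push_cast [hτ]; ring
    rw [h1, h2]

theorem tip_trace' {m n : ℕ} (A B : Matrix (Fin m) (Fin n) ℝ) :
    tip A B = (A * Bᵀ).trace := by
  unfold tip Matrix.trace
  refine Finset.sum_congr rfl fun i _ => ?_
  simp [Matrix.mul_apply, Matrix.diag]

theorem tip_diagonal' {r : ℕ} (f : Fin r → ℝ) (C : Matrix (Fin r) (Fin r) ℝ) :
    tip (Matrix.diagonal f) C = ∑ p, f p * C p p := by
  unfold tip
  refine Finset.sum_congr rfl fun p _ => ?_
  rw [Finset.sum_eq_single p]
  · rw [Matrix.diagonal_apply_eq]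
  · intro b _ hb
    simp [Matrix.diagonal_apply_ne f (Ne.symm hb)]
  · simp

theorem trace_mul_diag' {r : ℕ} (C : Matrix (Fin r) (Fin r) ℝ) (g : Fin r → ℝ) :
    (C * Matrix.diagonal g).trace = ∑ p, C p p * g p := by
  unfold Matrix.trace
  refine Finset.sum_congr rfl fun p _ => ?_
  simp [Matrix.diag, Matrix.mul_diagonal]

set_option maxHeartbeats 1000000 in
/-- Theorem 2, Case 1: if the columns of `X_Ω` are the leading `r`
unit eigenvectors of `M` (eigenvalues `λ₁ > ⋯ > λ_r > λ_{r+1} ≥ ⋯ ≥ λ_N`, in order),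
then the Riemannian Hessian of `g` at `X_Ω` satisfies
`hess g(X_Ω)[U,U] ≥ (1/2) d_min ‖U‖_F²` on the tangent space, and `X_Ω` is a
global minimizer of `g` on the Stiefel manifold. -/
theorem stmt_8 {N r : ℕ} (hr : 1 ≤ r) (hrN : r < N)
    (M : Matrix (Fin N) (Fin N) ℝ) (hM : M.IsSymm)
    (lam : Fin N → ℝ) (v : Fin N → Fin N → ℝ)
    (horth : ∀ i j : Fin N, v i ⬝ᵥ v j = if i = j then 1 else 0)
    (heig : ∀ i : Fin N, M *ᵥ v i = lam i • v i)
    (hstrict : ∀ s j : Fin N, (s : ℕ) < (j : ℕ) → (j : ℕ) ≤ r → lam j < lam s)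
    (hmono : ∀ s j : Fin N, r ≤ (s : ℕ) → s ≤ j → lam j ≤ lam s)
    (X : Matrix (Fin N) (Fin r) ℝ)
    (hX : ∀ (i : Fin N) (j : Fin r), X i j = v (Fin.castLE hrN.le j) i) :
    (∀ U : Matrix (Fin N) (Fin r) ℝ, Xᵀ * U + Uᵀ * X = 0 →
      tip (Xᵀ * M * X) (Uᵀ * U * Nr r) - tip M (U * Nr r * Uᵀ) ≥
        (1/2 : ℝ) * dmin lam r * ∑ i, ∑ j, U i j ^ 2) ∧
    (∀ Z : Matrix (Fin N) (Fin r) ℝ, Zᵀ * Z = 1 →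
      -(1/2 : ℝ) * (Xᵀ * M * X * Nr r).trace ≤ -(1/2 : ℝ) * (Zᵀ * M * Z * Nr r).trace) := by
  set V : Matrix (Fin N) (Fin N) ℝ := Matrix.of fun i k => v k i with hV
  have hVtV : Vᵀ * V = 1 := by
    ext k l
    rw [Matrix.mul_apply, Matrix.one_apply, ← horth k l]
    simp [hV, dotProduct]
  have hVVt : V * Vᵀ = 1 := mul_eq_one_comm.mp hVtV
  have hMV : M * V = V * Matrix.diagonal lam := by
    ext i k
    rw [Matrix.mul_diagonal]
    have h1 : (M * V) i k = (M *ᵥ v k) i := by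
      simp [Matrix.mul_apply, Matrix.mulVec, dotProduct, hV]
    rw [h1, heig k]
    simp [hV, mul_comm]
  have hVMV : Vᵀ * M * V = Matrix.diagonal lam := by
    rw [Matrix.mul_assoc, hMV, ← Matrix.mul_assoc, hVtV, Matrix.one_mul]
  have hXMX : Xᵀ * M * X
      = Matrix.diagonal (fun p : Fin r => lam (Fin.castLE hrN.le p)) := by
    have hMX : M * X
        = Matrix.of fun i q => lam (Fin.castLE hrN.le q) * v (Fin.castLE hrN.le q) i := by
      ext i q
      have h1 : (M * X) i q = (M *ᵥ v (Fin.castLE hrN.le q)) i := by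
        simp [Matrix.mul_apply, Matrix.mulVec, dotProduct, hX]
      rw [h1, heig]
      simp
    rw [Matrix.mul_assoc, hMX]
    ext p q
    rw [Matrix.mul_apply]
    have h2 : ∀ i, Xᵀ p i * (Matrix.of fun i q =>
          lam (Fin.castLE hrN.le q) * v (Fin.castLE hrN.le q) i) i q
        = lam (Fin.castLE hrN.le q) * (v (Fin.castLE hrN.le p) i * v (Fin.castLE hrN.le q) i) := by
      intro i
      simp [hX]
      ring
    rw [Finset.sum_congr rfl fun i _ => h2 i, ← Finset.mul_sum]
    have hdp : ∑ i, v (Fin.castLE hrN.le p) i * v (Fin.castLE hrN.le q) i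
        = if (Fin.castLE hrN.le p) = (Fin.castLE hrN.le q) then (1:ℝ) else 0 := by
      simpa [dotProduct] using horth (Fin.castLE hrN.le p) (Fin.castLE hrN.le q)
    rw [hdp]
    by_cases hpq : p = q
    · subst hpq
      simp [Matrix.diagonal_apply_eq]
    · have hne : Fin.castLE hrN.le p ≠ Fin.castLE hrN.le q := by
        intro h
        exact hpq (Fin.ext (by simpa using congrArg Fin.val h))
      rw [if_neg hne, Matrix.diagonal_apply_ne _ hpq]
      ring
  constructor
  · -- Hessian lower bound
    intro U hU0
    set A : Matrix (Fin N) (Fin r) ℝ := Vᵀ * U with hAdef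
    have hUVA : U = V * A := by
      rw [hAdef, ← Matrix.mul_assoc, hVVt, Matrix.one_mul]
    have hXtU : ∀ p q : Fin r, (Xᵀ * U) p q = A (Fin.castLE hrN.le p) q := by
      intro p q
      rw [hAdef, Matrix.mul_apply, Matrix.mul_apply]
      exact Finset.sum_congr rfl fun i _ => by simp [hX, hV]
    have hUtX : ∀ p q : Fin r, (Uᵀ * X) p q = A (Fin.castLE hrN.le q) p := by
      intro p q
      rw [hAdef, Matrix.mul_apply, Matrix.mul_apply]
      exact Finset.sum_congr rfl fun i _ => by simp [hX, hV, mul_comm]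
    have hA : ∀ p q : Fin r,
        A (Fin.castLE hrN.le p) q + A (Fin.castLE hrN.le q) p = 0 := by
      intro p q
      have h := congrFun (congrFun hU0 p) q
      simp only [Matrix.add_apply, Matrix.zero_apply] at h
      rw [hXtU p q, hUtX p q] at h
      exact h
    have hUtU : Uᵀ * U = Aᵀ * A := by
      conv_lhs => rw [hUVA]
      rw [Matrix.transpose_mul, Matrix.mul_assoc, ← Matrix.mul_assoc Vᵀ V A,
        hVtV, Matrix.one_mul]
    have hUMU : Uᵀ * M * U = Aᵀ * Matrix.diagonal lam * A := by
      conv_lhs => rw [hUVA]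
      rw [Matrix.transpose_mul, Matrix.mul_assoc (Aᵀ * Vᵀ) M (V * A)]
      rw [show M * (V * A) = V * (Matrix.diagonal lam * A) by
        rw [← Matrix.mul_assoc, hMV, Matrix.mul_assoc]]
      rw [Matrix.mul_assoc Aᵀ Vᵀ (V * (Matrix.diagonal lam * A)),
        ← Matrix.mul_assoc Vᵀ V (Matrix.diagonal lam * A), hVtV, Matrix.one_mul,
        ← Matrix.mul_assoc]
    have hAA : ∀ p, (Uᵀ * U) p p = ∑ k, A k p ^ 2 := by
      intro p
      rw [hUtU, Matrix.mul_apply]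
      exact Finset.sum_congr rfl fun k _ => by simp [sq]
    have hnorm : ∑ i, ∑ j, U i j ^ 2 = ∑ p : Fin r, ∑ k : Fin N, A k p ^ 2 := by
      rw [Finset.sum_comm]
      refine Finset.sum_congr rfl fun p _ => ?_
      rw [← hAA p, Matrix.mul_apply]
      exact (Finset.sum_congr rfl fun i _ => by simp [sq]).symm
    have hT1 : tip (Xᵀ * M * X) (Uᵀ * U * Nr r)
        = ∑ p : Fin r, lam (Fin.castLE hrN.le p) * ((∑ k, A k p ^ 2) * ((r:ℝ) - (p:ℕ))) := by
      rw [hXMX, tip_diagonal']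
      refine Finset.sum_congr rfl fun p _ => ?_
      have h3 : (Uᵀ * U * Nr r) p p = (Uᵀ * U) p p * ((r:ℝ) - (p:ℕ)) := by
        simp only [Nr]
        rw [Matrix.mul_diagonal]
      rw [h3, hAA p]
    have hT2 : tip M (U * Nr r * Uᵀ)
        = ∑ p : Fin r, (∑ k, A k p * (lam k * A k p)) * ((r:ℝ) - (p:ℕ)) := by
      rw [tip_trace']
      have hsym : (U * Nr r * Uᵀ)ᵀ = U * Nr r * Uᵀ := by
        simp only [Nr, Matrix.transpose_mul, Matrix.transpose_transpose,
          Matrix.diagonal_transpose, Matrix.mul_assoc]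
      rw [hsym]
      have hcyc : (M * (U * Nr r * Uᵀ)).trace = (Uᵀ * M * U * Nr r).trace := by
        rw [show M * (U * Nr r * Uᵀ) = (M * (U * Nr r)) * Uᵀ by
          simp only [Matrix.mul_assoc]]
        rw [Matrix.trace_mul_comm]
        rw [show Uᵀ * (M * (U * Nr r)) = Uᵀ * M * U * Nr r by
          simp only [Matrix.mul_assoc]]
      rw [hcyc, hUMU]
      rw [show Aᵀ * Matrix.diagonal lam * A * Nr r
          = (Aᵀ * (Matrix.diagonal lam * A)) * Nr r by simp only [Matrix.mul_assoc]]
      simp only [Nr]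
      rw [trace_mul_diag']
      refine Finset.sum_congr rfl fun p _ => ?_
      congr 1
      rw [Matrix.mul_apply]
      exact Finset.sum_congr rfl fun k _ => by simp [Matrix.diagonal_mul]
    rw [hT1, hT2, hnorm]
    have hcomb : (∑ p : Fin r, lam (Fin.castLE hrN.le p) * ((∑ k, A k p ^ 2) * ((r:ℝ) - (p:ℕ))))
          - ∑ p : Fin r, (∑ k, A k p * (lam k * A k p)) * ((r:ℝ) - (p:ℕ))
        = ∑ p : Fin r, ∑ k : Fin N,
            ((r:ℝ) - (p:ℕ)) * (lam (Fin.castLE hrN.le p) - lam k) * A k p ^ 2 := by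
      rw [← Finset.sum_sub_distrib]
      refine Finset.sum_congr rfl fun p _ => ?_
      rw [show lam (Fin.castLE hrN.le p) * ((∑ k, A k p ^ 2) * ((r:ℝ) - (p:ℕ)))
          = ∑ k, lam (Fin.castLE hrN.le p) * (A k p ^ 2 * ((r:ℝ) - (p:ℕ))) by
        rw [Finset.sum_mul, Finset.mul_sum]]
      rw [Finset.sum_mul, ← Finset.sum_sub_distrib]
      exact Finset.sum_congr rfl fun k _ => by ring
    rw [hcomb]
    exact hess_scalar' hrN lam (dmin lam r) (dmin_nonneg' hr hrN lam hstrict)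
      (dmin_le' lam hstrict) hmono A hA
  · -- global minimizer
    intro Z hZ
    set B : Matrix (Fin N) (Fin r) ℝ := Vᵀ * Z with hBdef
    have hZVB : Z = V * B := by
      rw [hBdef, ← Matrix.mul_assoc, hVVt, Matrix.one_mul]
    have hBtB : Bᵀ * B = 1 := by
      rw [hBdef, Matrix.transpose_mul, Matrix.transpose_transpose,
        Matrix.mul_assoc, ← Matrix.mul_assoc V Vᵀ Z, hVVt, Matrix.one_mul, hZ]
    have hZMZ : Zᵀ * M * Z = Bᵀ * Matrix.diagonal lam * B := by
      conv_lhs => rw [hZVB]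
      rw [Matrix.transpose_mul, Matrix.mul_assoc (Bᵀ * Vᵀ) M (V * B)]
      rw [show M * (V * B) = V * (Matrix.diagonal lam * B) by
        rw [← Matrix.mul_assoc, hMV, Matrix.mul_assoc]]
      rw [Matrix.mul_assoc Bᵀ Vᵀ (V * (Matrix.diagonal lam * B)),
        ← Matrix.mul_assoc Vᵀ V (Matrix.diagonal lam * B), hVtV, Matrix.one_mul,
        ← Matrix.mul_assoc]
    have htrZ : (Zᵀ * M * Z * Nr r).trace
        = ∑ p : Fin r, (∑ k, B k p * (lam k * B k p)) * ((r:ℝ) - (p:ℕ)) := by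
      rw [hZMZ]
      rw [show Bᵀ * Matrix.diagonal lam * B * Nr r
          = (Bᵀ * (Matrix.diagonal lam * B)) * Nr r by simp only [Matrix.mul_assoc]]
      simp only [Nr]
      rw [trace_mul_diag']
      refine Finset.sum_congr rfl fun p _ => ?_
      congr 1
      rw [Matrix.mul_apply]
      exact Finset.sum_congr rfl fun k _ => by simp [Matrix.diagonal_mul]
    have htrX : (Xᵀ * M * X * Nr r).trace
        = ∑ p : Fin r, lam (Fin.castLE hrN.le p) * ((r:ℝ) - (p:ℕ)) := by
      rw [hXMX]
      simp only [Nr]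
      rw [trace_mul_diag']
      exact Finset.sum_congr rfl fun p _ => by rw [Matrix.diagonal_apply_eq]
    have hcol : ∀ p : Fin r, ∑ k, B k p ^ 2 = 1 := by
      intro p
      have h := congrFun (congrFun hBtB p) p
      rw [Matrix.mul_apply] at h
      simp only [Matrix.one_apply_eq] at h
      rw [← h]
      exact Finset.sum_congr rfl fun k _ => by simp [sq]
    have hrow : ∀ k : Fin N, ∑ p, B k p ^ 2 ≤ 1 := by
      intro k
      set P : Matrix (Fin N) (Fin N) ℝ := B * Bᵀ with hPdef
      have hPP : P * P = P := by
        rw [hPdef, Matrix.mul_assoc, ← Matrix.mul_assoc Bᵀ B Bᵀ, hBtB, Matrix.one_mul]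
      have hPsym : ∀ a b, P a b = P b a := by
        intro a b
        rw [hPdef, Matrix.mul_apply, Matrix.mul_apply]
        exact Finset.sum_congr rfl fun p _ => by simp [mul_comm]
      have hPkk : P k k = ∑ p, B k p ^ 2 := by
        rw [hPdef, Matrix.mul_apply]
        exact Finset.sum_congr rfl fun p _ => by simp [sq]
      have h1 : P k k = ∑ l, P k l ^ 2 := by
        have h := congrFun (congrFun hPP k) k
        rw [Matrix.mul_apply] at h
        rw [← h]
        exact Finset.sum_congr rfl fun l _ => by rw [hPsym l k]; ring
      have h2 : P k k ^ 2 ≤ ∑ l, P k l ^ 2 :=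
        Finset.single_le_sum (f := fun l => P k l ^ 2) (fun l _ => sq_nonneg _) (Finset.mem_univ k)
      have h3 : 0 ≤ P k k := by
        rw [hPkk]
        exact Finset.sum_nonneg fun p _ => sq_nonneg _
      have h4 : P k k ≤ 1 := by nlinarith
      rw [← hPkk]
      exact h4
    have hmain := global_scalar' hrN lam hstrict hmono (fun k p => B k p ^ 2)
      (fun k p => sq_nonneg _) hcol hrow
    have heqZ : ∑ p : Fin r, ((r:ℝ) - (p:ℕ)) * (∑ k, lam k * B k p ^ 2)
        = (Zᵀ * M * Z * Nr r).trace := by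
      rw [htrZ]
      refine Finset.sum_congr rfl fun p _ => ?_
      rw [Finset.mul_sum, Finset.sum_mul]
      exact Finset.sum_congr rfl fun k _ => by ring
    have heqX : ∑ p : Fin r, ((r:ℝ) - (p:ℕ)) * lam (Fin.castLE hrN.le p)
        = (Xᵀ * M * X * Nr r).trace := by
      rw [htrX]
      exact Finset.sum_congr rfl fun p _ => by ring
    rw [heqZ, heqX] at hmain
    linarith
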